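/- Let p be prime, P ∈ ℤ_p[x₁,...,xₙ], with successive thickness decompositions P(r₀ + p·x) = p^t Q(x) and Q(r₁ + p·x) = p^{t'} R(x). Then t' ≤ t; that is, thickness is nonincreasing along the trunk. -/

import Mathlib

open MvPolynomial

lemma coeff_pscale {R : Type*} [CommRing R] {σ : Type*} [DecidableEq σ] (c : R)
    (φ : MvPolynomial σ R) (e : σ →₀ ℕ) :
    coeff e (bind₁ (fun i => C c * X i) φ)
      = c ^ (e.sum fun _ k => k) * coeff e φ := by
  induction φ using MvPolynomial.induction_on' with
  | add f g hf hg => simp [map_add, coeff_add, hf, hg, mul_add]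
  | monomial u a =>
    rw [bind₁_monomial]
    have h1 : (∏ i ∈ u.support, (C c * X i : MvPolynomial σ R) ^ u i)
        = C (c ^ (u.sum fun _ k => k)) * monomial u 1 := by
      simp only [mul_pow]
      rw [Finset.prod_mul_distrib]
      congr 1
      · rw [Finsupp.sum, ← Finset.prod_pow_eq_pow_sum, map_prod]
        simp [C_pow]
      · rw [monomial_eq, C_1, one_mul, Finsupp.prod]
    rw [h1, ← mul_assoc, ← C_mul, coeff_C_mul, coeff_monomial, coeff_monomial]
    split_ifs with h
    · subst h; ring
    · simp

/-- `pShift p m r P` is the polynomial `P(r + pᵐ·x)`. -/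
noncomputable def pShift (p : ℕ) [Fact p.Prime] {n : ℕ} (m : ℕ) (r : Fin n → ℤ_[p])
    (P : MvPolynomial (Fin n) ℤ_[p]) : MvPolynomial (Fin n) ℤ_[p] :=
  bind₁ (fun i => C (r i) + C ((p : ℤ_[p]) ^ m) * X i) P

/-- Thickness is nonincreasing along the trunk: if `P(r₀ + p·x) = pᵗ Q(x)` and
`Q(r₁ + p·x) = p^{t'} R(x)` (with `t`, `t'` maximal), then `t' ≤ t`. -/
theorem thickness_nonincreasing (p : ℕ) [Fact p.Prime] {n : ℕ}
    (P Q R : MvPolynomial (Fin n) ℤ_[p]) (r₀ r₁ : Fin n → ℤ_[p]) (t t' : ℕ)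
    (hQ : pShift p 1 r₀ P = C ((p : ℤ_[p]) ^ t) * Q)
    (hQmax : ¬ C (p : ℤ_[p]) ∣ Q)
    (hR : pShift p 1 r₁ Q = C ((p : ℤ_[p]) ^ t') * R)
    (hRmax : ¬ C (p : ℤ_[p]) ∣ R) :
    t' ≤ t := by
  by_contra hlt
  push_neg at hlt
  have hp0 : (p : ℤ_[p]) ≠ 0 := Nat.cast_ne_zero.mpr (Fact.out (p := p.Prime)).ne_zero
  -- S = Q(r₁ + x)
  set S : MvPolynomial (Fin n) ℤ_[p] := bind₁ (fun i => C (r₁ i) + X i) Q with hSdef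
  -- U = P(r₀ + p r₁ + x)
  set U : MvPolynomial (Fin n) ℤ_[p] :=
    bind₁ (fun i => C (r₀ i + (p : ℤ_[p]) * r₁ i) + X i) P with hUdef
  -- F1 : S(p x) = p^{t'} R
  have hF1 : bind₁ (fun i => C ((p : ℤ_[p])) * X i) S = C ((p : ℤ_[p]) ^ t') * R := by
    have hfun : (fun i : Fin n => bind₁ (fun j : Fin n => C ((p : ℤ_[p])) * X j) (C (r₁ i) + X i))
        = fun i : Fin n => C (r₁ i) + C ((p : ℤ_[p]) ^ 1) * X i := by
      funext i
      simp [pow_one, algHom_C]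
    rw [hSdef, bind₁_bind₁, hfun]
    exact hR
  -- F2 : U(p x) = p^t S
  have hF2 : bind₁ (fun i => C ((p : ℤ_[p])) * X i) U = C ((p : ℤ_[p]) ^ t) * S := by
    have h1 : bind₁ (fun i => C (r₁ i) + X i) (pShift p 1 r₀ P)
        = bind₁ (fun i => C ((p : ℤ_[p])) * X i) U := by
      unfold pShift
      rw [hUdef, bind₁_bind₁, bind₁_bind₁]
      have hfun : (fun i : Fin n => bind₁ (fun j : Fin n => C (r₁ j) + X j)
            (C (r₀ i) + C ((p : ℤ_[p]) ^ 1) * X i))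
          = fun i : Fin n => bind₁ (fun j : Fin n => C ((p : ℤ_[p])) * X j)
            (C (r₀ i + (p : ℤ_[p]) * r₁ i) + X i) := by
        funext i
        simp only [map_add, map_mul, bind₁_X_right, algHom_C, pow_one, C_add, C_mul, algebraMap_eq]
        ring
      rw [hfun]
    rw [← h1, hQ, map_mul, algHom_C, hSdef]
    simp [algebraMap_eq]
  -- every coefficient of S is divisible by p
  have hdvd : C ((p : ℤ_[p])) ∣ S := by
    rw [C_dvd_iff_dvd_coeff]
    intro e
    set d : ℕ := e.sum fun _ k => k with hd
    by_cases hcase : d ≤ t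
    · -- use F1 : p^d * coeff e S = p^{t'} * coeff e R
      have h1 := congrArg (coeff e) hF1
      rw [coeff_pscale, coeff_C_mul, ← hd] at h1
      have ht' : t' = d + (t' - d) := by omega
      rw [ht', pow_add, mul_assoc] at h1
      have h2 : coeff e S = (p : ℤ_[p]) ^ (t' - d) * coeff e R :=
        mul_left_cancel₀ (pow_ne_zero d hp0) h1
      rw [h2]
      exact Dvd.dvd.mul_right (dvd_pow_self _ (by omega : t' - d ≠ 0)) _
    · -- use F2 : p^d * coeff e U = p^t * coeff e S
      have h1 := congrArg (coeff e) hF2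
      rw [coeff_pscale, coeff_C_mul, ← hd] at h1
      have hdt : d = t + (d - t) := by omega
      rw [hdt, pow_add, mul_assoc] at h1
      have h2 : (p : ℤ_[p]) ^ (d - t) * coeff e U = coeff e S :=
        mul_left_cancel₀ (pow_ne_zero t hp0) h1
      rw [← h2]
      exact Dvd.dvd.mul_right (dvd_pow_self _ (by omega : d - t ≠ 0)) _
  -- transport back to Q
  apply hQmax
  have hQS : bind₁ (fun i => X i - C (r₁ i)) S = Q := by
    rw [hSdef, bind₁_bind₁]
    have : (fun i => bind₁ (fun j => X j - C (r₁ j)) (C (r₁ i) + X i))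
        = fun i : Fin n => (X i : MvPolynomial (Fin n) ℤ_[p]) := by
      funext i
      simp [algHom_C]
    rw [this, bind₁_X_left]
    rfl
  obtain ⟨W, hW⟩ := hdvd
  refine ⟨bind₁ (fun i => X i - C (r₁ i)) W, ?_⟩
  rw [← hQS, hW, map_mul, algHom_C]
  simp [algebraMap_eq]
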